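/- Define β(x,t) = (1/L(t))·arccos(cosh(x·L(t))/cosh(L(t))) with L(t) = (1/2)·arcosh((1+8t²+21t⁴-2t⁶)/(2t²(1+t²)²)). For t₁, t₂ ∈ (0,1) with t₂ > t₁, and for all x ∈ (0,1), one has 0 < β(x,t₂) - β(x,t₁) < β(0,t₂) - β(0,t₁). -/

import Mathlib

open Real

lemma my_sinh_lt_mul_cosh {x : ℝ} (hx : 0 < x) : Real.sinh x < x * Real.cosh x := by
  have h : StrictMonoOn (fun y => y * Real.cosh y - Real.sinh y) (Set.Ici 0) := by
    apply strictMonoOn_of_deriv_pos (convex_Ici 0)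
    · exact ((continuous_id.mul Real.continuous_cosh).sub Real.continuous_sinh).continuousOn
    · intro y hy
      rw [interior_Ici, Set.mem_Ioi] at hy
      have hd : HasDerivAt (fun y => y * Real.cosh y - Real.sinh y)
          (1 * Real.cosh y + y * Real.sinh y - Real.cosh y) y :=
        ((hasDerivAt_id y).mul (Real.hasDerivAt_cosh y)).sub (Real.hasDerivAt_sinh y)
      rw [hd.deriv]
      have hs : 0 < Real.sinh y := Real.sinh_pos_iff.mpr hy
      nlinarith
  have h0 := h Set.self_mem_Ici (Set.mem_Ici.mpr hx.le) hx
  simp only [Real.sinh_zero, Real.cosh_zero] at h0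
  nlinarith

lemma Qpos {α β : ℝ} (hα : 0 < α) (hαβ : α < β) :
    α * Real.sinh β * Real.cosh α < β * Real.sinh α * Real.cosh β := by
  have hd : 0 < β - α := by linarith
  have h1 : Real.sinh (β - α) < (β - α) * Real.cosh (β - α) := my_sinh_lt_mul_cosh hd
  have h2 : Real.cosh (β - α) < Real.cosh β := by
    rw [Real.cosh_lt_cosh, abs_of_pos hd, abs_of_pos (by linarith : (0:ℝ) < β)]; linarith
  have h3 : α < Real.sinh α := Real.self_lt_sinh_iff.mpr hα
  have h4 : Real.sinh (β - α) = Real.sinh β * Real.cosh α - Real.cosh β * Real.sinh α :=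
    Real.sinh_sub β α
  have h5 : (0:ℝ) < Real.cosh β := Real.cosh_pos β
  have h6 : (0:ℝ) < Real.cosh (β - α) := Real.cosh_pos (β - α)
  nlinarith [mul_nonneg (mul_nonneg hd.le (sub_pos.mpr h3).le) h5.le,
    mul_pos (mul_pos hα hd) (sub_pos.mpr h2),
    mul_pos hα (sub_pos.mpr h1)]

lemma K1 {a b : ℝ} (ha : 0 < a) (hab : a < b) :
    b * Real.cosh a * Real.sinh b - a * Real.sinh a * Real.cosh b ≤
      Real.sinh b ^ 2 - Real.sinh a ^ 2 := by
  have hsu : Real.sinh (b - a) = Real.sinh b * Real.cosh a - Real.cosh b * Real.sinh a :=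
    Real.sinh_sub b a
  have hsv : Real.sinh (b + a) = Real.sinh b * Real.cosh a + Real.cosh b * Real.sinh a :=
    Real.sinh_add b a
  have h1 : b - a < Real.sinh (b - a) := Real.self_lt_sinh_iff.mpr (by linarith)
  have h2 : b + a < Real.sinh (b + a) := Real.self_lt_sinh_iff.mpr (by linarith)
  have h3 : 0 < Real.sinh (b - a) := Real.sinh_pos_iff.mpr (by linarith)
  have h4 : 0 < Real.sinh (b + a) := Real.sinh_pos_iff.mpr (by linarith)
  have key1 : Real.sinh b ^ 2 - Real.sinh a ^ 2 = Real.sinh (b - a) * Real.sinh (b + a) := by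
    rw [hsu, hsv]
    have e1 := Real.cosh_sq a
    have e2 := Real.cosh_sq b
    nlinarith [e1, e2]
  have key2 : b * Real.cosh a * Real.sinh b - a * Real.sinh a * Real.cosh b =
      ((b + a) / 2) * Real.sinh (b - a) + ((b - a) / 2) * Real.sinh (b + a) := by
    rw [hsu, hsv]; ring
  nlinarith [mul_nonneg (le_of_lt (sub_pos.mpr h1)) h4.le,
    mul_nonneg (le_of_lt (sub_pos.mpr h2)) h3.le]

lemma ratio_lemma {u ℓ₁ ℓ₂ : ℝ} (hu0 : 0 < u) (hu1 : u < 1) (h2 : 0 < ℓ₂) (h12 : ℓ₂ < ℓ₁) :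
    Real.sinh (u * ℓ₁) * Real.sinh ℓ₂ < Real.sinh (u * ℓ₂) * Real.sinh ℓ₁ := by
  have hmono : StrictMonoOn (fun ℓ => Real.sinh ℓ / Real.sinh (u * ℓ)) (Set.Ioi 0) := by
    apply strictMonoOn_of_deriv_pos (convex_Ioi 0)
    · apply ContinuousOn.div Real.continuous_sinh.continuousOn
        (Real.continuous_sinh.comp (continuous_const.mul continuous_id)).continuousOn
      intro ℓ hℓ
      exact (Real.sinh_pos_iff.mpr (mul_pos hu0 hℓ)).ne'
    · intro ℓ hℓ
      rw [interior_Ioi, Set.mem_Ioi] at hℓ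
      have hin : HasDerivAt (fun ℓ : ℝ => Real.sinh (u * ℓ)) (Real.cosh (u * ℓ) * u) ℓ := by
        simpa using ((hasDerivAt_id ℓ).const_mul u).sinh
      have hd : HasDerivAt (fun ℓ => Real.sinh ℓ / Real.sinh (u * ℓ))
          ((Real.cosh ℓ * Real.sinh (u * ℓ) - Real.sinh ℓ * (Real.cosh (u * ℓ) * u)) /
            Real.sinh (u * ℓ) ^ 2) ℓ :=
        (Real.hasDerivAt_sinh ℓ).div hin (Real.sinh_pos_iff.mpr (mul_pos hu0 hℓ)).ne'
      rw [hd.deriv]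
      apply div_pos _ (pow_pos (Real.sinh_pos_iff.mpr (mul_pos hu0 hℓ)) 2)
      have hQ := Qpos (mul_pos hu0 hℓ) (by nlinarith : u * ℓ < ℓ)
      nlinarith
  have h1pos : (0:ℝ) < ℓ₁ := lt_trans h2 h12
  have := hmono (Set.mem_Ioi.mpr h2) (Set.mem_Ioi.mpr h1pos) h12
  rw [div_lt_div_iff₀ (Real.sinh_pos_iff.mpr (mul_pos hu0 h2))
    (Real.sinh_pos_iff.mpr (mul_pos hu0 h1pos))] at this
  nlinarith

lemma J_mono {u ℓ₁ ℓ₂ : ℝ} (hu0 : 0 < u) (hu1 : u < 1) (h2 : 0 < ℓ₂) (h12 : ℓ₂ < ℓ₁) :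
    Real.sinh (u * ℓ₁) / Real.sqrt (Real.sinh ℓ₁ ^ 2 - Real.sinh (u * ℓ₁) ^ 2) <
      Real.sinh (u * ℓ₂) / Real.sqrt (Real.sinh ℓ₂ ^ 2 - Real.sinh (u * ℓ₂) ^ 2) := by
  have h1pos : (0:ℝ) < ℓ₁ := lt_trans h2 h12
  have hp1 : 0 < Real.sinh (u * ℓ₁) := Real.sinh_pos_iff.mpr (mul_pos hu0 h1pos)
  have hp2 : 0 < Real.sinh (u * ℓ₂) := Real.sinh_pos_iff.mpr (mul_pos hu0 h2)
  have hq1 : Real.sinh (u * ℓ₁) < Real.sinh ℓ₁ := Real.sinh_lt_sinh.mpr (by nlinarith)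
  have hq2 : Real.sinh (u * ℓ₂) < Real.sinh ℓ₂ := Real.sinh_lt_sinh.mpr (by nlinarith)
  have hd1 : 0 < Real.sinh ℓ₁ ^ 2 - Real.sinh (u * ℓ₁) ^ 2 := by nlinarith
  have hd2 : 0 < Real.sinh ℓ₂ ^ 2 - Real.sinh (u * ℓ₂) ^ 2 := by nlinarith
  have hs1 : 0 < Real.sqrt (Real.sinh ℓ₁ ^ 2 - Real.sinh (u * ℓ₁) ^ 2) := Real.sqrt_pos.mpr hd1
  have hs2 : 0 < Real.sqrt (Real.sinh ℓ₂ ^ 2 - Real.sinh (u * ℓ₂) ^ 2) := Real.sqrt_pos.mpr hd2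
  rw [div_lt_div_iff₀ hs1 hs2]
  have hkey := ratio_lemma hu0 hu1 h2 h12
  apply lt_of_pow_lt_pow_left₀ 2 (mul_nonneg hp2.le hs1.le)
  have e1 : Real.sqrt (Real.sinh ℓ₁ ^ 2 - Real.sinh (u * ℓ₁) ^ 2) ^ 2 =
      Real.sinh ℓ₁ ^ 2 - Real.sinh (u * ℓ₁) ^ 2 := Real.sq_sqrt hd1.le
  have e2 : Real.sqrt (Real.sinh ℓ₂ ^ 2 - Real.sinh (u * ℓ₂) ^ 2) ^ 2 =
      Real.sinh ℓ₂ ^ 2 - Real.sinh (u * ℓ₂) ^ 2 := Real.sq_sqrt hd2.le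
  rw [mul_pow, mul_pow, e1, e2]
  have hq2pos : 0 < Real.sinh ℓ₂ := Real.sinh_pos_iff.mpr h2
  have hq1pos : 0 < Real.sinh ℓ₁ := Real.sinh_pos_iff.mpr h1pos
  nlinarith [mul_pos (sub_pos.mpr hkey)
    (add_pos (mul_pos hp2 hq1pos) (mul_pos hp1 hq2pos))]

lemma beta_strictAnti {x : ℝ} (hx0 : 0 < x) (hx1 : x < 1) :
    StrictAntiOn (fun ℓ => (1 / ℓ) * Real.arccos (Real.cosh (x * ℓ) / Real.cosh ℓ))
      (Set.Ioi (0:ℝ)) := by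
  apply strictAntiOn_of_deriv_neg (convex_Ioi 0)
  · apply ContinuousOn.mul
    · exact continuousOn_const.div continuousOn_id fun ℓ hℓ => ne_of_gt hℓ
    · exact (Real.continuous_arccos.comp
        ((Real.continuous_cosh.comp (continuous_const.mul continuous_id)).div
          Real.continuous_cosh fun ℓ => (Real.cosh_pos ℓ).ne')).continuousOn
  · intro ℓ hℓ
    rw [interior_Ioi, Set.mem_Ioi] at hℓ
    have ha : 0 < x * ℓ := mul_pos hx0 hℓ
    have hab : x * ℓ < ℓ := by nlinarith
    have hcoshlt : Real.cosh (x * ℓ) < Real.cosh ℓ := by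
      rw [Real.cosh_lt_cosh, abs_of_pos ha, abs_of_pos hℓ]; exact hab
    have hcb : (0:ℝ) < Real.cosh ℓ := Real.cosh_pos ℓ
    set c : ℝ := Real.cosh (x * ℓ) / Real.cosh ℓ with hc
    have hc0 : 0 < c := div_pos (Real.cosh_pos _) hcb
    have hc1 : c < 1 := (div_lt_one hcb).mpr hcoshlt
    have hsinhlt : Real.sinh (x * ℓ) < Real.sinh ℓ := Real.sinh_lt_sinh.mpr hab
    have hsinha : 0 < Real.sinh (x * ℓ) := Real.sinh_pos_iff.mpr ha
    have hd2 : 0 < Real.sinh ℓ ^ 2 - Real.sinh (x * ℓ) ^ 2 := by nlinarith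
    set s : ℝ := Real.sqrt (Real.sinh ℓ ^ 2 - Real.sinh (x * ℓ) ^ 2) with hs
    have hspos : 0 < s := Real.sqrt_pos.mpr hd2
    have hs2 : s ^ 2 = Real.sinh ℓ ^ 2 - Real.sinh (x * ℓ) ^ 2 := Real.sq_sqrt hd2.le
    have h1mc : 1 - c ^ 2 = (s / Real.cosh ℓ) ^ 2 := by
      rw [hc, div_pow, div_pow, hs2]
      have e1 := Real.cosh_sq (x * ℓ)
      have e2 := Real.cosh_sq ℓ
      field_simp
      nlinarith [e1, e2]
    have hsqrt : Real.sqrt (1 - c ^ 2) = s / Real.cosh ℓ := by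
      rw [h1mc, Real.sqrt_sq (by positivity)]
    -- derivative computation
    have hca : HasDerivAt (fun ℓ : ℝ => Real.cosh (x * ℓ)) (Real.sinh (x * ℓ) * x) ℓ := by
      simpa using ((hasDerivAt_id ℓ).const_mul x).cosh
    have hcder : HasDerivAt (fun ℓ : ℝ => Real.cosh (x * ℓ) / Real.cosh ℓ)
        ((Real.sinh (x * ℓ) * x * Real.cosh ℓ - Real.cosh (x * ℓ) * Real.sinh ℓ) /
          Real.cosh ℓ ^ 2) ℓ := hca.div (Real.hasDerivAt_cosh ℓ) hcb.ne'
    have harc : HasDerivAt Real.arccos (-(1 / Real.sqrt (1 - c ^ 2))) c :=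
      Real.hasDerivAt_arccos (by linarith) (by linarith)
    have hθ : HasDerivAt (fun ℓ : ℝ => Real.arccos (Real.cosh (x * ℓ) / Real.cosh ℓ))
        (-(1 / Real.sqrt (1 - c ^ 2)) *
          ((Real.sinh (x * ℓ) * x * Real.cosh ℓ - Real.cosh (x * ℓ) * Real.sinh ℓ) /
            Real.cosh ℓ ^ 2)) ℓ := HasDerivAt.comp (h₂ := Real.arccos) ℓ harc hcder
    have hinv : HasDerivAt (fun ℓ : ℝ => 1 / ℓ) (-(1 / ℓ ^ 2)) ℓ := by
      simpa [one_div] using hasDerivAt_inv (ne_of_gt hℓ)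
    have hG := hinv.mul hθ
    have hGd : deriv (fun ℓ : ℝ => (1 / ℓ) * Real.arccos (Real.cosh (x * ℓ) / Real.cosh ℓ)) ℓ = _ := hG.deriv
    rw [hGd]
    set θ := Real.arccos c with hθdef
    set θ' := -(1 / Real.sqrt (1 - c ^ 2)) *
        ((Real.sinh (x * ℓ) * x * Real.cosh ℓ - Real.cosh (x * ℓ) * Real.sinh ℓ) /
          Real.cosh ℓ ^ 2) with hθ'def
    have hθpos : 0 < θ := Real.arccos_pos.mpr hc1
    have hsinlt : s / Real.cosh ℓ < θ := by
      have := Real.sin_lt hθpos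
      rwa [hθdef, Real.sin_arccos, hsqrt] at this
    have hkey : ℓ * θ' ≤ s / Real.cosh ℓ := by
      have hP := K1 ha hab
      have hθ'eq : θ' = (Real.cosh (x * ℓ) * Real.sinh ℓ - Real.sinh (x * ℓ) * x * Real.cosh ℓ) /
          (s * Real.cosh ℓ) := by
        rw [hθ'def, hsqrt]
        field_simp
        ring
      rw [hθ'eq, ← mul_div_assoc]
      rw [div_le_div_iff₀ (by positivity) hcb]
      nlinarith [mul_nonneg (sub_nonneg.mpr hP) hcb.le, hs2]
    have hfin : -(1 / ℓ ^ 2) * θ + 1 / ℓ * θ' = (ℓ * θ' - θ) / ℓ ^ 2 := by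
      field_simp
      ring
    rw [hfin]
    apply div_neg_of_neg_of_pos _ (by positivity)
    linarith

lemma J_contOn {x ℓ : ℝ} (hx1 : x < 1) (hℓ : 0 < ℓ) :
    ContinuousOn (fun u => Real.sinh (u * ℓ) / Real.sqrt (Real.sinh ℓ ^ 2 - Real.sinh (u * ℓ) ^ 2))
      (Set.Icc 0 x) := by
  apply ContinuousOn.div
  · exact (Real.continuous_sinh.comp (continuous_id.mul continuous_const)).continuousOn
  · exact (Real.continuous_sqrt.comp
      ((continuous_const.sub ((Real.continuous_sinh.comp
        (continuous_id.mul continuous_const)).pow 2)))).continuousOn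
  · intro u hu
    have hultl : u * ℓ < ℓ := by nlinarith [hu.1, hu.2]
    have h1 : Real.sinh (u * ℓ) < Real.sinh ℓ := Real.sinh_lt_sinh.mpr hultl
    have h2 : -Real.sinh ℓ < Real.sinh (u * ℓ) := by
      have : Real.sinh (-ℓ) < Real.sinh (u * ℓ) := Real.sinh_lt_sinh.mpr (by nlinarith [hu.1])
      rwa [Real.sinh_neg] at this
    have : 0 < Real.sinh ℓ ^ 2 - Real.sinh (u * ℓ) ^ 2 := by nlinarith
    exact (Real.sqrt_pos.mpr this).ne'

lemma integral_repr {x ℓ : ℝ} (hx0 : 0 < x) (hx1 : x < 1) (hℓ : 0 < ℓ) :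
    ∫ u in (0:ℝ)..x, Real.sinh (u * ℓ) / Real.sqrt (Real.sinh ℓ ^ 2 - Real.sinh (u * ℓ) ^ 2)
      = (1 / ℓ) * Real.arccos (1 / Real.cosh ℓ)
        - (1 / ℓ) * Real.arccos (Real.cosh (x * ℓ) / Real.cosh ℓ) := by
  have hcb : (0:ℝ) < Real.cosh ℓ := Real.cosh_pos ℓ
  have hmain := intervalIntegral.integral_eq_sub_of_hasDerivAt
    (f := fun u : ℝ => -(1 / ℓ) * Real.arccos (Real.cosh (u * ℓ) / Real.cosh ℓ))
    (f' := fun u : ℝ => Real.sinh (u * ℓ) / Real.sqrt (Real.sinh ℓ ^ 2 - Real.sinh (u * ℓ) ^ 2))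
    (a := 0) (b := x) ?_ ?_
  · rw [hmain]
    norm_num [Real.cosh_zero]
    ring
  · intro u hu
    rw [Set.uIcc_of_le hx0.le] at hu
    obtain ⟨hu0, hux⟩ := hu
    have hultl : u * ℓ < ℓ := by nlinarith
    have hulnn : 0 ≤ u * ℓ := mul_nonneg hu0 hℓ.le
    have hcoshlt : Real.cosh (u * ℓ) < Real.cosh ℓ := by
      rw [Real.cosh_lt_cosh, abs_of_nonneg hulnn, abs_of_pos hℓ]; exact hultl
    set c : ℝ := Real.cosh (u * ℓ) / Real.cosh ℓ with hc
    have hc0 : 0 < c := div_pos (Real.cosh_pos _) hcb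
    have hc1 : c < 1 := (div_lt_one hcb).mpr hcoshlt
    have hsinhlt : Real.sinh (u * ℓ) < Real.sinh ℓ := Real.sinh_lt_sinh.mpr hultl
    have hsinha : 0 ≤ Real.sinh (u * ℓ) := Real.sinh_nonneg_iff.mpr hulnn
    have hd2 : 0 < Real.sinh ℓ ^ 2 - Real.sinh (u * ℓ) ^ 2 := by nlinarith
    set s : ℝ := Real.sqrt (Real.sinh ℓ ^ 2 - Real.sinh (u * ℓ) ^ 2) with hs
    have hspos : 0 < s := Real.sqrt_pos.mpr hd2
    have hs2 : s ^ 2 = Real.sinh ℓ ^ 2 - Real.sinh (u * ℓ) ^ 2 := Real.sq_sqrt hd2.le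
    have h1mc : 1 - c ^ 2 = (s / Real.cosh ℓ) ^ 2 := by
      rw [hc, div_pow, div_pow, hs2]
      have e1 := Real.cosh_sq (u * ℓ)
      have e2 := Real.cosh_sq ℓ
      field_simp
      nlinarith [e1, e2]
    have hsqrt : Real.sqrt (1 - c ^ 2) = s / Real.cosh ℓ := by
      rw [h1mc, Real.sqrt_sq (by positivity)]
    have hca : HasDerivAt (fun u : ℝ => Real.cosh (u * ℓ)) (Real.sinh (u * ℓ) * ℓ) u := by
      simpa using ((hasDerivAt_id u).mul_const ℓ).cosh
    have hcder : HasDerivAt (fun u : ℝ => Real.cosh (u * ℓ) / Real.cosh ℓ)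
        (Real.sinh (u * ℓ) * ℓ / Real.cosh ℓ) u := hca.div_const _
    have harc : HasDerivAt Real.arccos (-(1 / Real.sqrt (1 - c ^ 2))) c :=
      Real.hasDerivAt_arccos (by linarith) (by linarith)
    have hθ : HasDerivAt (fun u : ℝ => Real.arccos (Real.cosh (u * ℓ) / Real.cosh ℓ))
        (-(1 / Real.sqrt (1 - c ^ 2)) * (Real.sinh (u * ℓ) * ℓ / Real.cosh ℓ)) u :=
      HasDerivAt.comp (h₂ := Real.arccos) u harc hcder
    have hF := hθ.const_mul (-(1 / ℓ))
    refine hF.congr_deriv ?_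
    rw [hsqrt]
    field_simp
  · exact (J_contOn hx1 hℓ).intervalIntegrable_of_Icc hx0.le

noncomputable def arcosh (x : ℝ) : ℝ := Real.log (x + Real.sqrt (x^2 - 1))

noncomputable def L (t : ℝ) : ℝ :=
  (1/2) * _root_.arcosh ((1 + 8*t^2 + 21*t^4 - 2*t^6) / (2*t^2*(1+t^2)^2))

noncomputable def β (x t : ℝ) : ℝ :=
  (1 / L t) * Real.arccos (Real.cosh (x * L t) / Real.cosh (L t))

lemma A_gt_one {t : ℝ} (ht0 : 0 < t) (ht1 : t < 1) :
    1 < (1 + 8*t^2 + 21*t^4 - 2*t^6) / (2*t^2*(1+t^2)^2) := by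
  rw [lt_div_iff₀ (by positivity)]
  nlinarith [pow_pos ht0 2, pow_pos ht0 4, pow_pos ht0 6, sq_nonneg t,
    mul_pos (pow_pos ht0 4) (sub_pos.mpr ht1)]

lemma arcosh_pos {y : ℝ} (hy : 1 < y) : 0 < _root_.arcosh y := by
  unfold _root_.arcosh
  apply Real.log_pos
  have : (0:ℝ) ≤ Real.sqrt (y^2 - 1) := Real.sqrt_nonneg _
  linarith

lemma arcosh_lt_arcosh {y₁ y₂ : ℝ} (h1 : 1 < y₁) (h12 : y₁ < y₂) :
    _root_.arcosh y₁ < _root_.arcosh y₂ := by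
  unfold _root_.arcosh
  apply Real.log_lt_log
  · have : (0:ℝ) ≤ Real.sqrt (y₁^2 - 1) := Real.sqrt_nonneg _
    linarith
  · have hsq : Real.sqrt (y₁^2 - 1) ≤ Real.sqrt (y₂^2 - 1) := by
      apply Real.sqrt_le_sqrt; nlinarith
    linarith

lemma L_pos {t : ℝ} (ht0 : 0 < t) (ht1 : t < 1) : 0 < L t := by
  unfold L
  have := _root_.arcosh_pos (A_gt_one ht0 ht1)
  linarith

lemma L_anti {t₁ t₂ : ℝ} (h10 : 0 < t₁) (h21 : t₂ < 1) (h12 : t₁ < t₂) : L t₂ < L t₁ := by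
  have h20 : 0 < t₂ := lt_trans h10 h12
  have h11 : t₁ < 1 := lt_trans h12 h21
  unfold L
  have hA2 := A_gt_one h20 h21
  have hlt : (1 + 8*t₂^2 + 21*t₂^4 - 2*t₂^6) / (2*t₂^2*(1+t₂^2)^2) <
      (1 + 8*t₁^2 + 21*t₁^4 - 2*t₁^6) / (2*t₁^2*(1+t₁^2)^2) := by
    rw [div_lt_div_iff₀ (by positivity) (by positivity)]
    have key : (1 + 8*t₁^2 + 21*t₁^4 - 2*t₁^6) * (2*t₂^2*(1+t₂^2)^2) -
        (1 + 8*t₂^2 + 21*t₂^4 - 2*t₂^6) * (2*t₁^2*(1+t₁^2)^2) =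
        (t₂^2 - t₁^2) * ((2 + 4*t₁^2 + 2*t₁^4) + t₂^2*(4 - 8*t₁^2 + 20*t₁^4)
          + t₂^4*(2 + 20*t₁^2 + 50*t₁^4)) := by ring
    have h4u : (0:ℝ) ≤ 4 - 8*t₁^2 + 20*t₁^4 := by
      nlinarith [sq_nonneg (1 - t₁^2), sq_nonneg (t₁^2)]
    have hfac2 : (0:ℝ) < (2 + 4*t₁^2 + 2*t₁^4) + t₂^2*(4 - 8*t₁^2 + 20*t₁^4)
        + t₂^4*(2 + 20*t₁^2 + 50*t₁^4) := by
      have h1 : (0:ℝ) ≤ t₂^2*(4 - 8*t₁^2 + 20*t₁^4) := mul_nonneg (sq_nonneg t₂) h4u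
      nlinarith [sq_nonneg t₁, sq_nonneg (t₁^2), pow_two_nonneg (t₂^2), sq_nonneg (t₂^2*t₁), sq_nonneg (t₂^2*t₁^2)]
    have hfac1 : (0:ℝ) < t₂^2 - t₁^2 := by nlinarith
    nlinarith [mul_pos hfac1 hfac2]
  have := arcosh_lt_arcosh hA2 hlt
  linarith

theorem stmt_14 : ∀ t₁ ∈ Set.Ioo (0:ℝ) 1, ∀ t₂ ∈ Set.Ioo (0:ℝ) 1, t₁ < t₂ →
    ∀ x ∈ Set.Ioo (0:ℝ) 1,
      0 < β x t₂ - β x t₁ ∧ β x t₂ - β x t₁ < β 0 t₂ - β 0 t₁ := by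
  rintro t₁ ⟨h10, h11⟩ t₂ ⟨h20, h21⟩ h12 x ⟨hx0, hx1⟩
  have hℓ1 : 0 < L t₁ := L_pos h10 h11
  have hℓ2 : 0 < L t₂ := L_pos h20 h21
  have hℓlt : L t₂ < L t₁ := L_anti h10 h21 h12
  have hbx1 : β x t₁ = (1 / L t₁) * Real.arccos (Real.cosh (x * L t₁) / Real.cosh (L t₁)) := rfl
  have hbx2 : β x t₂ = (1 / L t₂) * Real.arccos (Real.cosh (x * L t₂) / Real.cosh (L t₂)) := rfl
  have hb01 : β 0 t₁ = (1 / L t₁) * Real.arccos (1 / Real.cosh (L t₁)) := by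
    unfold β; norm_num
  have hb02 : β 0 t₂ = (1 / L t₂) * Real.arccos (1 / Real.cosh (L t₂)) := by
    unfold β; norm_num
  constructor
  · have h := beta_strictAnti hx0 hx1 (Set.mem_Ioi.mpr hℓ2) (Set.mem_Ioi.mpr hℓ1) hℓlt
    simp only [] at h
    rw [hbx1, hbx2]
    linarith
  · have hint1 : IntervalIntegrable
        (fun u => Real.sinh (u * L t₁) / Real.sqrt (Real.sinh (L t₁) ^ 2 - Real.sinh (u * L t₁) ^ 2))
        MeasureTheory.volume 0 x := (J_contOn hx1 hℓ1).intervalIntegrable_of_Icc hx0.le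
    have hint2 : IntervalIntegrable
        (fun u => Real.sinh (u * L t₂) / Real.sqrt (Real.sinh (L t₂) ^ 2 - Real.sinh (u * L t₂) ^ 2))
        MeasureTheory.volume 0 x := (J_contOn hx1 hℓ2).intervalIntegrable_of_Icc hx0.le
    have hpos : 0 < ∫ u in (0:ℝ)..x,
        (Real.sinh (u * L t₂) / Real.sqrt (Real.sinh (L t₂) ^ 2 - Real.sinh (u * L t₂) ^ 2)
          - Real.sinh (u * L t₁) / Real.sqrt (Real.sinh (L t₁) ^ 2 - Real.sinh (u * L t₁) ^ 2)) := by
      apply intervalIntegral.intervalIntegral_pos_of_pos_on (hint2.sub hint1)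
      · intro u hu
        exact sub_pos.mpr (J_mono hu.1 (lt_trans hu.2 hx1) hℓ2 hℓlt)
      · exact hx0
    rw [intervalIntegral.integral_sub hint2 hint1, integral_repr hx0 hx1 hℓ1,
      integral_repr hx0 hx1 hℓ2] at hpos
    rw [hbx1, hbx2, hb01, hb02]
    linarith
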